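/- arXiv:2410.05994 — 3 statements merged into one kernel-verified Lean document; each statement's English description precedes it below -/
import Mathlib

section
/- Let A be a commutative ring and ξ ∈ A. The quotient ring R = A[u,v]/(uv - ξ) is free as an A-module with basis {1} ∪ {u^i : i ≥ 1} ∪ {v^j : j ≥ 1}. -/
open MvPolynomial

noncomputable section BasisUVAux

variable (A : Type) [CommRing A] (ξ : A)

private abbrev uvG : MvPolynomial (Fin 2) A := X 0 * X 1 - C ξ

private abbrev uvI : Ideal (MvPolynomial (Fin 2) A) := Ideal.span {uvG A ξ}

private abbrev uvR := MvPolynomial (Fin 2) A ⧸ uvI A ξ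

private def uvf' : ℤ → MvPolynomial (Fin 2) A := fun n =>
  if 0 ≤ n then (X 0) ^ n.toNat else (X 1) ^ (-n).toNat

private def uvf : ℤ → uvR A ξ := fun n => Ideal.Quotient.mk _ (uvf' A n)

private def uvφ : (ℤ →₀ A) →ₗ[A] uvR A ξ := Finsupp.linearCombination A (uvf A ξ)

private def uvφ' : (ℤ →₀ A) →ₗ[A] MvPolynomial (Fin 2) A :=
  Finsupp.linearCombination A (uvf' A)

private def uvψ : MvPolynomial (Fin 2) A →ₗ[A] (ℤ →₀ A) :=
  (basisMonomials (Fin 2) A).constr A fun m =>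
    ξ ^ (min (m 0) (m 1)) • Finsupp.single ((m 0 : ℤ) - (m 1 : ℤ)) (1 : A)

private lemma uvψ_monomial (m : Fin 2 →₀ ℕ) (a : A) :
    uvψ A ξ (monomial m a)
      = (a * ξ ^ (min (m 0) (m 1))) • Finsupp.single ((m 0 : ℤ) - (m 1 : ℤ)) (1 : A) := by
  have h1 : monomial m a = a • monomial m (1 : A) := by
    rw [MvPolynomial.smul_monomial, smul_eq_mul, mul_one]
  have hb : (monomial m (1 : A)) = basisMonomials (Fin 2) A m := by
    rw [coe_basisMonomials]
  rw [h1, map_smul, hb, uvψ, Module.Basis.constr_basis, smul_smul]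

private lemma uvψ_mul_g (p : MvPolynomial (Fin 2) A) : uvψ A ξ (p * uvG A ξ) = 0 := by
  induction p using MvPolynomial.induction_on' with
  | monomial m a =>
    have hX : (X 0 : MvPolynomial (Fin 2) A) * X 1
        = monomial (Finsupp.single 0 1 + Finsupp.single 1 1) 1 := by
      show monomial (Finsupp.single 0 1) 1 * monomial (Finsupp.single 1 1) 1 = _
      rw [monomial_mul, mul_one]
    rw [uvG, mul_sub, hX, monomial_mul, C_apply, monomial_mul, add_zero,
      map_sub, uvψ_monomial, uvψ_monomial]
    have h0 : ((m + (Finsupp.single 0 1 + Finsupp.single 1 1) : Fin 2 →₀ ℕ)) 0 = m 0 + 1 := by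
      simp [Finsupp.single_apply]
    have h1 : ((m + (Finsupp.single 0 1 + Finsupp.single 1 1) : Fin 2 →₀ ℕ)) 1 = m 1 + 1 := by
      simp [Finsupp.single_apply]
    rw [h0, h1]
    have hmin : min (m 0 + 1) (m 1 + 1) = min (m 0) (m 1) + 1 := by omega
    have hcast : ((m 0 + 1 : ℕ) : ℤ) - ((m 1 + 1 : ℕ) : ℤ) = (m 0 : ℤ) - (m 1 : ℤ) := by
      push_cast; ring
    rw [hmin, hcast, sub_eq_zero]
    congr 1
    rw [pow_succ]; ring
  | add p q hp hq =>
    rw [add_mul, map_add, hp, hq, add_zero]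

private lemma uvψ_comp_φ' (x : ℤ →₀ A) : uvψ A ξ (uvφ' A x) = x := by
  have h : (uvψ A ξ) ∘ₗ (uvφ' A) = LinearMap.id := by
    apply Finsupp.lhom_ext
    intro n a
    simp only [LinearMap.comp_apply, LinearMap.id_apply, uvφ',
      Finsupp.linearCombination_single]
    rw [map_smul]
    rcases le_or_gt 0 n with hn | hn
    · have : uvf' A n = monomial (Finsupp.single 0 n.toNat) 1 := by
        rw [uvf', if_pos hn, X_pow_eq_monomial]
      rw [this, uvψ_monomial]
      have h0 : (Finsupp.single (0 : Fin 2) n.toNat) 0 = n.toNat := by simp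
      have h1 : (Finsupp.single (0 : Fin 2) n.toNat) 1 = 0 := by
        simp [Finsupp.single_apply]
      rw [h0, h1]
      have hmin : min n.toNat 0 = 0 := Nat.min_zero _
      have hsub : ((n.toNat : ℤ)) - ((0:ℕ) : ℤ) = n := by omega
      rw [hmin, pow_zero, mul_one, one_smul, hsub, Finsupp.smul_single, smul_eq_mul, mul_one]
    · have : uvf' A n = monomial (Finsupp.single 1 (-n).toNat) 1 := by
        rw [uvf', if_neg (not_le.mpr hn), X_pow_eq_monomial]
      rw [this, uvψ_monomial]
      have h0 : (Finsupp.single (1 : Fin 2) (-n).toNat) 0 = 0 := by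
        simp [Finsupp.single_apply]
      have h1 : (Finsupp.single (1 : Fin 2) (-n).toNat) 1 = (-n).toNat := by simp
      rw [h0, h1]
      have hmin : min 0 (-n).toNat = 0 := Nat.zero_min _
      have hsub : (((0:ℕ)) : ℤ) - ((-n).toNat : ℤ) = n := by omega
      rw [hmin, pow_zero, mul_one, one_smul, hsub, Finsupp.smul_single, smul_eq_mul, mul_one]
  exact LinearMap.congr_fun h x

private lemma uv_mk_comp (x : ℤ →₀ A) :
    uvφ A ξ x = Ideal.Quotient.mk (uvI A ξ) (uvφ' A x) := by
  have h : uvφ A ξ = (Ideal.Quotient.mkₐ A (uvI A ξ)).toLinearMap ∘ₗ uvφ' A := by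
    apply Finsupp.lhom_ext
    intro n a
    simp only [uvφ, uvφ', LinearMap.comp_apply, Finsupp.linearCombination_single,
      AlgHom.toLinearMap_apply, map_smul, Ideal.Quotient.mkₐ_eq_mk]
    rfl
  rw [h]; rfl

private lemma uvφ_injective : Function.Injective (uvφ A ξ) := by
  rw [← LinearMap.ker_eq_bot, LinearMap.ker_eq_bot']
  intro x hx
  rw [uv_mk_comp] at hx
  rw [Ideal.Quotient.eq_zero_iff_mem, Ideal.mem_span_singleton'] at hx
  obtain ⟨p, hp⟩ := hx
  have h2 := uvψ_comp_φ' A ξ x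
  rw [← hp, uvψ_mul_g] at h2
  exact h2.symm

private lemma uv_hUV :
    (Ideal.Quotient.mk (uvI A ξ) (X 0)) * (Ideal.Quotient.mk (uvI A ξ) (X 1))
      = ξ • 1 := by
  have h : Ideal.Quotient.mk (uvI A ξ) (uvG A ξ) = 0 :=
    Ideal.Quotient.eq_zero_iff_mem.mpr (Ideal.subset_span rfl)
  rw [uvG, map_sub, sub_eq_zero] at h
  have hC : (C ξ : MvPolynomial (Fin 2) A) = ξ • 1 := by
    rw [← MvPolynomial.algebraMap_eq, Algebra.algebraMap_eq_smul_one]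
  rw [← map_mul, h, hC]
  show (Ideal.Quotient.mkₐ A (uvI A ξ)) (ξ • 1) = ξ • 1
  rw [map_smul, map_one]

private lemma uvf_pos (a : ℕ) :
    uvf A ξ (a : ℤ) = (Ideal.Quotient.mk (uvI A ξ) (X 0)) ^ a := by
  rw [uvf, uvf', if_pos (Int.ofNat_nonneg a), map_pow]
  simp

private lemma uvf_neg (b : ℕ) :
    uvf A ξ (-(b : ℤ)) = (Ideal.Quotient.mk (uvI A ξ) (X 1)) ^ b := by
  rcases Nat.eq_zero_or_pos b with hb | hb
  · subst hb; simp [uvf, uvf']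
  · rw [uvf, uvf', if_neg (by omega), map_pow]
    simp

private lemma uv_key (a b : ℕ) :
    (Ideal.Quotient.mk (uvI A ξ) (X 0)) ^ a * (Ideal.Quotient.mk (uvI A ξ) (X 1)) ^ b
      = ξ ^ (min a b) • uvf A ξ ((a : ℤ) - (b : ℤ)) := by
  induction a generalizing b with
  | zero =>
    rw [pow_zero, one_mul, Nat.zero_min, pow_zero, one_smul]
    have : ((0 : ℕ) : ℤ) - (b : ℤ) = -(b : ℤ) := by omega
    rw [this, uvf_neg]
  | succ a ih =>
    cases b with
    | zero =>
      rw [pow_zero, mul_one, Nat.min_zero, pow_zero, one_smul]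
      have : ((a + 1 : ℕ) : ℤ) - ((0 : ℕ) : ℤ) = ((a + 1 : ℕ) : ℤ) := by omega
      rw [this, uvf_pos]
    | succ c =>
      have hrw : (Ideal.Quotient.mk (uvI A ξ) (X 0)) ^ (a + 1)
            * (Ideal.Quotient.mk (uvI A ξ) (X 1)) ^ (c + 1)
          = ((Ideal.Quotient.mk (uvI A ξ) (X 0)) * (Ideal.Quotient.mk (uvI A ξ) (X 1)))
            * ((Ideal.Quotient.mk (uvI A ξ) (X 0)) ^ a
               * (Ideal.Quotient.mk (uvI A ξ) (X 1)) ^ c) := by ring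
      rw [hrw, uv_hUV, ih, smul_mul_assoc, one_mul, smul_smul, ← pow_succ']
      have hmin : min (a + 1) (c + 1) = min a c + 1 := by omega
      have hcast : ((a + 1 : ℕ) : ℤ) - ((c + 1 : ℕ) : ℤ) = (a : ℤ) - (c : ℤ) := by
        push_cast; ring
      rw [hmin, hcast]

private lemma uvφ_surjective : Function.Surjective (uvφ A ξ) := by
  intro r
  obtain ⟨p, rfl⟩ := Ideal.Quotient.mk_surjective r
  suffices h : ∀ p : MvPolynomial (Fin 2) A,
      Ideal.Quotient.mk (uvI A ξ) p ∈ LinearMap.range (uvφ A ξ) by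
    exact h p
  intro p
  induction p using MvPolynomial.induction_on' with
  | monomial m a =>
    have hm : m = Finsupp.single 0 (m 0) + Finsupp.single 1 (m 1) := by
      ext i; fin_cases i <;> simp [Finsupp.single_apply]
    have hmono : monomial m a = C a * (X 0 ^ (m 0) * X 1 ^ (m 1)) := by
      rw [X_pow_eq_monomial, X_pow_eq_monomial, monomial_mul, one_mul, C_apply,
        monomial_mul, mul_one, zero_add, ← hm]
    refine ⟨Finsupp.single ((m 0 : ℤ) - (m 1 : ℤ)) (a * ξ ^ (min (m 0) (m 1))), ?_⟩
    rw [uvφ, Finsupp.linearCombination_single]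
    rw [hmono, map_mul, map_mul, map_pow, map_pow, uv_key]
    have hCa : Ideal.Quotient.mk (uvI A ξ) (C a) = a • 1 := by
      have : (C a : MvPolynomial (Fin 2) A) = a • 1 := by
        rw [← MvPolynomial.algebraMap_eq, Algebra.algebraMap_eq_smul_one]
      rw [this]
      show (Ideal.Quotient.mkₐ A (uvI A ξ)) (a • 1) = a • 1
      rw [map_smul, map_one]
    rw [hCa, smul_mul_assoc, one_mul, smul_smul]
  | add p q hp hq =>
    rw [map_add]
    exact add_mem hp hq

end BasisUVAux

/-- `R = A[u,v]/(uv - ξ)` is free as an `A`-module with basis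
`{1} ∪ {u^i : i ≥ 1} ∪ {v^j : j ≥ 1}` (indexed here by `ℤ`: nonnegative `i` gives `u^i`,
nonpositive `-j` gives `v^j`, both giving `1` at `0`). -/
theorem basis_of_uv_ring (A : Type) [CommRing A] (ξ : A) :
    ∃ (B : Module.Basis ℤ A (MvPolynomial (Fin 2) A ⧸
        Ideal.span {(X 0 : MvPolynomial (Fin 2) A) * X 1 - C ξ})),
      (∀ i : ℕ, B (i : ℤ) = (Ideal.Quotient.mk _ (X 0)) ^ i) ∧
      (∀ j : ℕ, B (-(j : ℤ)) = (Ideal.Quotient.mk _ (X 1)) ^ j) := by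
  classical
  let e : (ℤ →₀ A) ≃ₗ[A] uvR A ξ :=
    LinearEquiv.ofBijective (uvφ A ξ) ⟨uvφ_injective A ξ, uvφ_surjective A ξ⟩
  refine ⟨Module.Basis.ofRepr e.symm, ?_, ?_⟩
  · intro i
    have h : (Module.Basis.ofRepr e.symm) (i : ℤ) = e (Finsupp.single (i : ℤ) 1) := by
      rw [← Module.Basis.repr_symm_single_one]
      rfl
    rw [h]
    show uvφ A ξ (Finsupp.single (i : ℤ) 1) = _
    rw [uvφ, Finsupp.linearCombination_single, one_smul, uvf_pos]
  · intro j
    have h : (Module.Basis.ofRepr e.symm) (-(j : ℤ)) = e (Finsupp.single (-(j : ℤ)) 1) := by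
      rw [← Module.Basis.repr_symm_single_one]
      rfl
    rw [h]
    show uvφ A ξ (Finsupp.single (-(j : ℤ)) 1) = _
    rw [uvφ, Finsupp.linearCombination_single, one_smul, uvf_neg]
end

section
/- Let A be a commutative ring and ξ ∈ A a nonzerodivisor. Then the images of u and v in R = A[u,v]/(uv - ξ) are nonzerodivisors in R. -/
open MvPolynomial

lemma aux_poly {B : Type*} [CommRing B] (b c : B) (hc : c ∈ nonZeroDivisors B)
    (f : Polynomial B) (h : (Polynomial.X * Polynomial.C b - Polynomial.C c) ∣ Polynomial.X * f) :
    (Polynomial.X * Polynomial.C b - Polynomial.C c) ∣ f := by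
  obtain ⟨g, hg⟩ := h
  have h0 : c * g.eval 0 = 0 := by
    have := congrArg (Polynomial.eval 0) hg
    simp at this
    linear_combination this
  have hg0 : g.eval 0 = 0 := (mem_nonZeroDivisors_iff.mp hc).2 _ (by rwa [mul_comm] at h0)
  have hXg : (Polynomial.X : Polynomial B) ∣ g :=
    Polynomial.X_dvd_iff.mpr (by rwa [Polynomial.coeff_zero_eq_eval_zero])
  obtain ⟨h', hh'⟩ := hXg
  refine ⟨h', ?_⟩
  have hX : (Polynomial.X : Polynomial B) ∈ nonZeroDivisors _ :=
    Polynomial.monic_X.mem_nonZeroDivisors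
  have : Polynomial.X * f = Polynomial.X * ((Polynomial.X * Polynomial.C b - Polynomial.C c) * h') := by
    rw [hg, hh']; ring
  exact mul_cancel_left_mem_nonZeroDivisors hX |>.1 this

lemma C_nzd {A : Type*} [CommRing A] {ξ : A} (hξ : ξ ∈ nonZeroDivisors A) (n : ℕ) :
    (C ξ : MvPolynomial (Fin n) A) ∈ nonZeroDivisors _ := by
  rw [mem_nonZeroDivisors_iff_right]
  intro p hp
  rw [mul_comm] at hp
  ext m
  have := congrArg (coeff m) hp
  rw [coeff_C_mul, coeff_zero] at this
  simpa using (mem_nonZeroDivisors_iff.mp hξ).2 _ (by rwa [mul_comm] at this)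

lemma key_dvd (A : Type) [CommRing A] (ξ : A) (hξ : ξ ∈ nonZeroDivisors A)
    (f : MvPolynomial (Fin 2) A)
    (h : ((X 0 : MvPolynomial (Fin 2) A) * X 1 - C ξ) ∣ X 0 * f) :
    ((X 0 : MvPolynomial (Fin 2) A) * X 1 - C ξ) ∣ f := by
  have hd : finSuccEquiv A 1 ((X 0 : MvPolynomial (Fin 2) A) * X 1 - C ξ)
      = Polynomial.X * Polynomial.C (X 0) - Polynomial.C (C ξ) := by
    have h1 : (X 1 : MvPolynomial (Fin 2) A) = X (Fin.succ 0) := rfl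
    have hC : finSuccEquiv A 1 (C ξ : MvPolynomial (Fin 2) A) = Polynomial.C (C ξ) := by
      simp [finSuccEquiv_apply]
    rw [map_sub, map_mul, h1, finSuccEquiv_X_zero, finSuccEquiv_X_succ, hC]
  have step : (Polynomial.X * Polynomial.C (X 0) - Polynomial.C (C ξ) :
      Polynomial (MvPolynomial (Fin 1) A)) ∣ finSuccEquiv A 1 f := by
    apply aux_poly (X 0) (C ξ : MvPolynomial (Fin 1) A) (C_nzd hξ 1)
    rw [← hd, ← finSuccEquiv_X_zero (R := A) (n := 1), ← map_mul]
    exact map_dvd _ h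
  have := map_dvd (finSuccEquiv A 1).symm step
  rwa [← hd, AlgEquiv.symm_apply_apply, AlgEquiv.symm_apply_apply] at this


/-- if `ξ ∈ A` is a nonzerodivisor, then the images of `u` and `v` in
`R = A[u,v]/(uv - ξ)` are nonzerodivisors in `R`. -/
theorem uv_nonzerodivisors (A : Type) [CommRing A] (ξ : A) (hξ : ξ ∈ nonZeroDivisors A) :
    (Ideal.Quotient.mk (Ideal.span {(X 0 : MvPolynomial (Fin 2) A) * X 1 - C ξ}) (X 0))
      ∈ nonZeroDivisors (MvPolynomial (Fin 2) A ⧸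
        Ideal.span {(X 0 : MvPolynomial (Fin 2) A) * X 1 - C ξ}) ∧
    (Ideal.Quotient.mk (Ideal.span {(X 0 : MvPolynomial (Fin 2) A) * X 1 - C ξ}) (X 1))
      ∈ nonZeroDivisors (MvPolynomial (Fin 2) A ⧸
        Ideal.span {(X 0 : MvPolynomial (Fin 2) A) * X 1 - C ξ}) := by
  set d : MvPolynomial (Fin 2) A := X 0 * X 1 - C ξ with hd_def
  have key1 : ∀ f : MvPolynomial (Fin 2) A, d ∣ X 1 * f → d ∣ f := by
    intro f h
    have σd : (renameEquiv A (Equiv.swap (0 : Fin 2) 1)) d = d := by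
      simp [hd_def, renameEquiv_apply]
      ring
    have h' : d ∣ X 0 * (renameEquiv A (Equiv.swap (0 : Fin 2) 1)) f := by
      have := map_dvd (renameEquiv A (Equiv.swap (0 : Fin 2) 1)) h
      rw [map_mul, σd] at this
      simpa [renameEquiv_apply] using this
    have := key_dvd A ξ hξ _ h'
    have := map_dvd (renameEquiv A (Equiv.swap (0 : Fin 2) 1)).symm this
    rwa [← hd_def, ← σd, AlgEquiv.symm_apply_apply, AlgEquiv.symm_apply_apply] at this
  constructor <;>
  · rw [mem_nonZeroDivisors_iff_right]
    intro x hx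
    obtain ⟨f, rfl⟩ := Ideal.Quotient.mk_surjective x
    rw [← map_mul, Ideal.Quotient.eq_zero_iff_mem, Ideal.mem_span_singleton] at hx
    rw [Ideal.Quotient.eq_zero_iff_mem, Ideal.mem_span_singleton]
    first
    | exact key_dvd A ξ hξ f (by rwa [mul_comm] at hx)
    | exact key1 f (by rwa [mul_comm] at hx)
end

section
/- Let A be a commutative ring and ξ ∈ A a nonzerodivisor. The A-algebra homomorphism A[u,v]/(uv - ξ) → A[σ, σ^{-1}] determined by u ↦ ξσ and v ↦ σ^{-1} is well-defined and injective. -/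
open MvPolynomial

namespace MapToLaurentAux

variable {A : Type} [CommRing A]

noncomputable def g (ξ : A) : MvPolynomial (Fin 2) A →+* LaurentPolynomial A :=
  (aeval ![LaurentPolynomial.C ξ * LaurentPolynomial.T 1, LaurentPolynomial.T (-1)]).toRingHom

lemma g_X0 (ξ : A) : g ξ (X 0) = LaurentPolynomial.C ξ * LaurentPolynomial.T 1 := by
  simp [g]

lemma g_X1 (ξ : A) : g ξ (X 1) = LaurentPolynomial.T (-1) := by
  simp [g]

lemma g_C (ξ a : A) : g ξ (C a) = LaurentPolynomial.C a := by
  simp [g, algebraMap_eq]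

lemma red (ξ : A) (m a b : ℕ) :
    (X 0 ^ (a + m) * X 1 ^ (b + m) : MvPolynomial (Fin 2) A) - C (ξ ^ m) * (X 0 ^ a * X 1 ^ b)
      ∈ Ideal.span {(X 0 : MvPolynomial (Fin 2) A) * X 1 - C ξ} := by
  induction m with
  | zero => simp
  | succ m ih =>
    have h1 : (X 0 ^ (a + (m + 1)) * X 1 ^ (b + (m + 1)) : MvPolynomial (Fin 2) A)
        - C (ξ ^ (m + 1)) * (X 0 ^ a * X 1 ^ b)
        = (X 0 ^ (a + m) * X 1 ^ (b + m)) * (X 0 * X 1 - C ξ)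
          + C ξ * ((X 0 ^ (a + m) * X 1 ^ (b + m)) - C (ξ ^ m) * (X 0 ^ a * X 1 ^ b)) := by
      simp only [map_pow]
      ring
    rw [h1]
    exact add_mem (Ideal.mul_mem_left _ _ (Ideal.subset_span rfl))
      (Ideal.mul_mem_left _ _ ih)

noncomputable def mono (k : ℤ) : MvPolynomial (Fin 2) A :=
  if 0 ≤ k then X 0 ^ k.toNat else X 1 ^ (-k).toNat

lemma mono_sub (a b : ℕ) : (mono ((a : ℤ) - b) : MvPolynomial (Fin 2) A)
    = X 0 ^ (a - b) * X 1 ^ (b - a) := by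
  unfold mono
  rcases le_or_gt b a with h | h
  · rw [if_pos (by omega)]
    have : ((a : ℤ) - b).toNat = a - b := by omega
    rw [this, Nat.sub_eq_zero_of_le h, pow_zero, mul_one]
  · rw [if_neg (by omega)]
    have : (-((a : ℤ) - b)).toNat = b - a := by omega
    rw [this, Nat.sub_eq_zero_of_le h.le, pow_zero, one_mul]

noncomputable def back (G : ℤ →₀ A) : MvPolynomial (Fin 2) A :=
  G.sum fun k c => C c * mono k

lemma back_single (k : ℤ) (c : A) : back (Finsupp.single k c) = C c * mono k := by
  unfold back
  rw [Finsupp.sum_single_index]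
  simp

lemma back_add (G₁ G₂ : ℤ →₀ A) : back (G₁ + G₂) = back G₁ + back G₂ := by
  unfold back
  rw [Finsupp.sum_add_index']
  · intro k; simp
  · intro k c₁ c₂; rw [map_add, add_mul]

lemma key (ξ : A) (F : MvPolynomial (Fin 2) A) :
    ∃ G : ℤ →₀ A,
      (F - back G ∈ Ideal.span {(X 0 : MvPolynomial (Fin 2) A) * X 1 - C ξ}) ∧
      ∀ k : ℤ, (g ξ F).coeff k = ξ ^ k.toNat * G k := by
  induction F using MvPolynomial.induction_on' with
  | monomial d c =>
    set a := d 0 with ha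
    set b := d 1 with hb
    have hd : monomial d c = C c * X 0 ^ a * X 1 ^ b := by
      rw [monomial_eq]
      rw [Finsupp.prod_fintype _ _ (fun i => pow_zero _)]
      rw [Fin.prod_univ_two]
      ring
    refine ⟨Finsupp.single ((a : ℤ) - b) (ξ ^ min a b * c), ?_, ?_⟩
    · rw [back_single, hd, mono_sub]
      have hmem := red ξ (min a b) (a - b) (b - a)
      have e1 : a - b + min a b = a := by omega
      have e2 : b - a + min a b = b := by omega
      rw [e1, e2] at hmem
      have h2 : C c * X 0 ^ a * X 1 ^ b
          - C (ξ ^ min a b * c) * (X 0 ^ (a - b) * X 1 ^ (b - a))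
          = C c * ((X 0 ^ a * X 1 ^ b : MvPolynomial (Fin 2) A)
              - C (ξ ^ min a b) * (X 0 ^ (a - b) * X 1 ^ (b - a))) := by
        rw [map_mul]; ring
      rw [h2]
      exact Ideal.mul_mem_left _ _ hmem
    · intro k
      have hgv : g ξ (monomial d c)
          = LaurentPolynomial.C (c * ξ ^ a) * LaurentPolynomial.T ((a : ℤ) - b) := by
        rw [hd, map_mul, map_mul, map_pow, map_pow, g_C, g_X0, g_X1, mul_pow,
          LaurentPolynomial.T_pow, LaurentPolynomial.T_pow, ← mul_assoc,
          LaurentPolynomial.mul_T_assoc, ← map_pow, ← map_mul]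
        congr 1
        ring
      rw [hgv, ← LaurentPolynomial.single_eq_C_mul_T, AddMonoidAlgebra.coeff_single, Finsupp.single_apply,
        Finsupp.single_apply]
      by_cases hk : (a : ℤ) - b = k
      · rw [if_pos hk, if_pos hk]
        have hpow : ξ ^ a = ξ ^ k.toNat * ξ ^ min a b := by
          rw [← pow_add]; congr 1; omega
        rw [hpow]; ring
      · rw [if_neg hk, if_neg hk, mul_zero]
  | add p q hp hq =>
    obtain ⟨G₁, hG₁, hc₁⟩ := hp
    obtain ⟨G₂, hG₂, hc₂⟩ := hq
    refine ⟨G₁ + G₂, ?_, ?_⟩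
    · rw [back_add]
      have : p + q - (back G₁ + back G₂) = (p - back G₁) + (q - back G₂) := by ring
      rw [this]
      exact add_mem hG₁ hG₂
    · intro k
      rw [map_add, AddMonoidAlgebra.coeff_add, Finsupp.add_apply, Finsupp.add_apply, hc₁ k, hc₂ k, mul_add]

end MapToLaurentAux

open MapToLaurentAux in
/-- for a nonzerodivisor `ξ ∈ A`, the `A`-algebra homomorphism
`A[u,v]/(uv - ξ) → A[σ,σ⁻¹]` with `u ↦ ξσ`, `v ↦ σ⁻¹` is well-defined and injective. -/
theorem map_to_laurent_injective (A : Type) [CommRing A] (ξ : A)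
    (hξ : ξ ∈ nonZeroDivisors A) :
    ∃ f : (MvPolynomial (Fin 2) A ⧸
        Ideal.span {(X 0 : MvPolynomial (Fin 2) A) * X 1 - C ξ}) →+* LaurentPolynomial A,
      (∀ a : A, f (Ideal.Quotient.mk _ (C a)) = LaurentPolynomial.C a) ∧
      f (Ideal.Quotient.mk _ (X 0)) = LaurentPolynomial.C ξ * LaurentPolynomial.T 1 ∧
      f (Ideal.Quotient.mk _ (X 1)) = LaurentPolynomial.T (-1) ∧
      Function.Injective f := by
  have hker : ∀ F ∈ Ideal.span {(X 0 : MvPolynomial (Fin 2) A) * X 1 - C ξ}, g ξ F = 0 := by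
    intro F hF
    have hle : Ideal.span {(X 0 : MvPolynomial (Fin 2) A) * X 1 - C ξ}
        ≤ RingHom.ker (g ξ) := by
      rw [Ideal.span_le, Set.singleton_subset_iff]
      simp only [SetLike.mem_coe, RingHom.mem_ker, map_sub, map_mul, g_X0, g_X1, g_C]
      rw [mul_assoc, ← LaurentPolynomial.T_add]
      simp
    exact hle hF
  refine ⟨Ideal.Quotient.lift _ (g ξ) hker, ?_, ?_, ?_, ?_⟩
  · intro a; rw [Ideal.Quotient.lift_mk, g_C]
  · rw [Ideal.Quotient.lift_mk, g_X0]
  · rw [Ideal.Quotient.lift_mk, g_X1]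
  · have hz : ∀ x, Ideal.Quotient.lift _ (g ξ) hker x = 0 → x = 0 := by
      intro x hx
      obtain ⟨F, rfl⟩ := Ideal.Quotient.mk_surjective x
      rw [Ideal.Quotient.lift_mk] at hx
      obtain ⟨G, hGI, hGc⟩ := key ξ F
      have hG0 : G = 0 := by
        ext k
        have h1 := hGc k
        rw [hx] at h1
        have h0 : (0 : LaurentPolynomial A).coeff k = 0 := rfl
        rw [h0] at h1
        have h2 := (mem_nonZeroDivisors_iff_right.mp (pow_mem hξ k.toNat)) (G k) (by rw [mul_comm]; exact h1.symm)
        simpa using h2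
      rw [hG0] at hGI
      have hb0 : back (0 : ℤ →₀ A) = (0 : MvPolynomial (Fin 2) A) := by
        unfold back; simp
      rw [hb0, sub_zero] at hGI
      rw [Ideal.Quotient.eq_zero_iff_mem]
      exact hGI
    intro x y hxy
    have : Ideal.Quotient.lift _ (g ξ) hker (x - y) = 0 := by
      rw [map_sub, hxy, sub_self]
    have := hz _ this
    exact sub_eq_zero.mp this
end
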